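/- arXiv:1302.5549 — 3 statements merged into one kernel-verified Lean document; each statement's English description precedes it below -/
import Mathlib

section
/- Let G1 = (V1, E1) and G2 = (V2, E2) be well-formed graphs over the same node type such that the sets V2 \ V1, V1 \ V2, E2 \ E1 and E1 \ E2 are finite. Then Δ(G1, G2) is minimal: for every operation o ∈ Δ(G1, G2), applying the set Δ(G1, G2) \ {o} to G1 (in the order: all remEdge operations, then all remNode operations, then all addNode operations, then all addEdge operations) does not yield G2. -/
/-- A graph over a node type `α`: a set of nodes and a set of edges
(unordered pairs of nodes). -/
structure OpGraph (α : Type*) where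
  V : Set α
  E : Set (Sym2 α)

/-- A graph is well-formed if its edges are pairs of *distinct* nodes and
both endpoints of every edge belong to the node set. -/
def OpGraph.WellFormed {α : Type*} (G : OpGraph α) : Prop :=
  (∀ e ∈ G.E, ¬ e.IsDiag) ∧ ∀ e ∈ G.E, ∀ v ∈ e, v ∈ G.V

/-- Update operations on graphs. -/
inductive Op (α : Type*) where
  | addNode (v : α)
  | remNode (v : α)
  | addEdge (e : Sym2 α)
  | remEdge (e : Sym2 α)

/-- The delta Δ(G1, G2). -/
def delta {α : Type*} (G1 G2 : OpGraph α) : Set (Op α) :=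
  (Op.addNode '' (G2.V \ G1.V)) ∪ (Op.remNode '' (G1.V \ G2.V)) ∪
  (Op.addEdge '' (G2.E \ G1.E)) ∪
  (Op.remEdge '' {e | e ∈ G1.E \ G2.E ∧ ∀ v ∈ e, v ∈ G2.V})

/-- The result of applying a set `S` of operations to a graph `G` in the order:
first all `remEdge` operations, then all `remNode` operations
(each of which removes the node and its incident edges),
then all `addNode` operations, then all `addEdge` operations. -/
def applyDelta {α : Type*} (S : Set (Op α)) (G : OpGraph α) : OpGraph α :=
  ⟨(G.V \ {v | Op.remNode v ∈ S}) ∪ {v | Op.addNode v ∈ S},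
   {e ∈ G.E | Op.remEdge e ∉ S ∧ ∀ v ∈ e, Op.remNode v ∉ S} ∪ {e | Op.addEdge e ∈ S}⟩

lemma mem_delta_addNode {α : Type*} {G1 G2 : OpGraph α} {v : α} :
    Op.addNode v ∈ delta G1 G2 ↔ v ∈ G2.V \ G1.V := by
  simp [delta]

lemma mem_delta_remNode {α : Type*} {G1 G2 : OpGraph α} {v : α} :
    Op.remNode v ∈ delta G1 G2 ↔ v ∈ G1.V \ G2.V := by
  simp [delta]

lemma mem_delta_addEdge {α : Type*} {G1 G2 : OpGraph α} {e : Sym2 α} :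
    Op.addEdge e ∈ delta G1 G2 ↔ e ∈ G2.E \ G1.E := by
  simp [delta]

lemma mem_delta_remEdge {α : Type*} {G1 G2 : OpGraph α} {e : Sym2 α} :
    Op.remEdge e ∈ delta G1 G2 ↔ e ∈ G1.E \ G2.E ∧ ∀ v ∈ e, v ∈ G2.V := by
  simp [delta]

/-- Δ(G1, G2) is minimal: removing any single operation `o` from it gives a set
whose application to G1 (in the order remEdge / remNode / addNode / addEdge)
does not yield G2. -/
theorem delta_minimal {α : Type*} (G1 G2 : OpGraph α)
    (h1 : G1.WellFormed) (h2 : G2.WellFormed)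
    (hfV₁ : (G2.V \ G1.V).Finite) (hfV₂ : (G1.V \ G2.V).Finite)
    (hfE₁ : (G2.E \ G1.E).Finite) (hfE₂ : (G1.E \ G2.E).Finite) :
    ∀ o ∈ delta G1 G2, applyDelta (delta G1 G2 \ {o}) G1 ≠ G2 := by
  rintro o ho heq
  have hV := congrArg OpGraph.V heq
  have hE := congrArg OpGraph.E heq
  simp only [applyDelta] at hV hE
  rcases ho with ((⟨v, hv, rfl⟩ | ⟨v, hv, rfl⟩) | ⟨e, he, rfl⟩) | ⟨e, he, rfl⟩
  · -- addNode
    have hmem : v ∈ G2.V := hv.1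
    rw [← hV] at hmem
    rcases hmem with h | h
    · exact hv.2 h.1
    · exact h.2 rfl
  · -- remNode
    have hmem : v ∈ G2.V := by
      rw [← hV]
      exact Set.mem_union_left _ ⟨hv.1, fun h => h.2 rfl⟩
    exact hv.2 hmem
  · -- addEdge
    have hmem : e ∈ G2.E := he.1
    rw [← hE] at hmem
    rcases hmem with h | h
    · exact he.2 h.1
    · have := (mem_delta_addEdge.mp h.1).2
      exact h.2 rfl
  · -- remEdge
    have hmem : e ∈ G2.E := by
      rw [← hE]
      refine Set.mem_union_left _ ⟨he.1.1, fun h => h.2 rfl, fun v hv h => ?_⟩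
      have := mem_delta_remNode.mp h.1
      exact this.2 (he.2 v hv)
    exact he.1.2 hmem
end

section
/- Let a timestamped log over [t0, t_cur] starting from a well-formed graph SG_{t0} with a finite edge set be given, and for t ∈ [t0, t_cur] let deg_t(v) denote the number of edges of SG_t incident to node v. Then for every node v and all t_k ≤ t_l in [t0, t_cur], the degree differential satisfies (as integers): deg_{t_l}(v) − deg_{t_k}(v) = (number of logged addEdge operations incident to v with timestamp in (t_k, t_l]) − (number of logged remEdge operations incident to v with timestamp in (t_k, t_l]). In particular, a differential range degree query can be answered from the delta alone, without reconstructing any snapshot. -/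
/-- A graph over a node type `α`: a set of nodes and a set of edges
(unordered pairs of nodes). -/
structure LogGraph (α : Type*) where
  V : Set α
  E : Set (Sym2 α)

/-- A graph is well-formed if its edges are pairs of *distinct* nodes and
both endpoints of every edge belong to the node set. -/
def LogGraph.WellFormed {α : Type*} (G : LogGraph α) : Prop :=
  (∀ e ∈ G.E, ¬ e.IsDiag) ∧ ∀ e ∈ G.E, ∀ v ∈ e, v ∈ G.V

/-- The action of a single operation on a graph: `addNode v` adds the node `v`;
`remNode v` removes `v` and all edges incident to it; `addEdge e` adds the edge `e`;
`remEdge e` removes the edge `e`. -/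
def applyOp {α : Type*} (G : LogGraph α) : Op α → LogGraph α
  | Op.addNode v => ⟨G.V ∪ {v}, G.E⟩
  | Op.remNode v => ⟨G.V \ {v}, {e ∈ G.E | v ∉ e}⟩
  | Op.addEdge e => ⟨G.V, G.E ∪ {e}⟩
  | Op.remEdge e => ⟨G.V, G.E \ {e}⟩

/-- Applying a sequence of operations to a graph, from left to right. -/
def applySeq {α : Type*} (G : LogGraph α) (l : List (Op α)) : LogGraph α :=
  l.foldl applyOp G

/-- Validity of an operation at a graph. -/
def validAt {α : Type*} (G : LogGraph α) : Op α → Prop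
  | Op.addNode v => v ∉ G.V
  | Op.remNode v => v ∈ G.V ∧ ∀ e ∈ G.E, v ∉ e
  | Op.addEdge e => ¬ e.IsDiag ∧ (∀ v ∈ e, v ∈ G.V) ∧ e ∉ G.E
  | Op.remEdge e => e ∈ G.E

/-- The inverse of an operation. -/
def Op.inv {α : Type*} : Op α → Op α
  | Op.addNode v => Op.remNode v
  | Op.remNode v => Op.addNode v
  | Op.addEdge e => Op.remEdge e
  | Op.remEdge e => Op.addEdge e

/-- Validity of a sequence of operations at a graph: each operation is valid at the
graph obtained by applying the preceding operations. -/
def validSeq {α : Type*} : LogGraph α → List (Op α) → Prop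
  | _, [] => True
  | G, op :: rest => validAt G op ∧ validSeq (applyOp G op) rest
/-- The snapshot at time `t` determined by an initial graph `SG0` and a timestamped
log `L`: the result of applying to `SG0` the logged operations with timestamp `≤ t`. -/
def snapshot {α τ : Type*} [LinearOrder τ] (SG0 : LogGraph α) (L : List (Op α × τ))
    (t : τ) : LogGraph α :=
  applySeq SG0 ((L.filter fun p => decide (p.2 ≤ t)).map Prod.fst)

/-- The degree of a node `v` in a graph `G`: the number of edges of `G` incident to `v`. -/
noncomputable def LogGraph.deg {α : Type*} (G : LogGraph α) (v : α) : ℕ :=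
  {e ∈ G.E | v ∈ e}.ncard

/-- `op` is an `addEdge` operation incident to the node `v`. -/
def isAddEdgeInc {α : Type*} [DecidableEq α] (v : α) : Op α → Bool
  | Op.addEdge e => decide (v ∈ e)
  | _ => false

/-- `op` is a `remEdge` operation incident to the node `v`. -/
def isRemEdgeInc {α : Type*} [DecidableEq α] (v : α) : Op α → Bool
  | Op.remEdge e => decide (v ∈ e)
  | _ => false

lemma validSeq_append_left {α : Type*} (G : LogGraph α) (l1 l2 : List (Op α))
    (h : validSeq G (l1 ++ l2)) : validSeq G l1 := by
  induction l1 generalizing G with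
  | nil => trivial
  | cons a l ih => exact ⟨h.1, ih _ h.2⟩

lemma applyOp_E_finite {α : Type*} (G : LogGraph α) (op : Op α) (h : G.E.Finite) :
    (applyOp G op).E.Finite := by
  cases op with
  | addNode v => exact h
  | remNode v => exact h.subset (Set.sep_subset _ _)
  | addEdge e => exact h.union (Set.finite_singleton e)
  | remEdge e => exact h.subset Set.diff_subset

lemma deg_delta {α : Type*} [DecidableEq α] (v : α) :
    ∀ (l : List (Op α)) (G : LogGraph α), G.E.Finite → validSeq G l →
      ((applySeq G l).deg v : ℤ) =
        (G.deg v : ℤ) + l.countP (isAddEdgeInc v) - l.countP (isRemEdgeInc v) := by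
  intro l
  induction l with
  | nil => intro G _ _; simp [applySeq]
  | cons op rest ih =>
    intro G hfin hval
    have hstep : ((applyOp G op).deg v : ℤ) =
        (G.deg v : ℤ) + (if isAddEdgeInc v op then 1 else 0)
          - (if isRemEdgeInc v op then 1 else 0) := by
      have hSfin : ({e ∈ G.E | v ∈ e}).Finite := hfin.subset (Set.sep_subset _ _)
      cases op with
      | addNode w => simp [applyOp, LogGraph.deg, isAddEdgeInc, isRemEdgeInc]
      | remNode w =>
        have hE : {e ∈ G.E | w ∉ e} = G.E := by
          ext e; exact ⟨fun h => h.1, fun h => ⟨h, hval.1.2 e h⟩⟩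
        simp [applyOp, LogGraph.deg, isAddEdgeInc, isRemEdgeInc, hE]
      | addEdge e =>
        by_cases hv : v ∈ e
        · have hset : {e' ∈ G.E ∪ {e} | v ∈ e'} = insert e {e' ∈ G.E | v ∈ e'} := by
            ext x
            simp only [Set.mem_union, Set.mem_singleton_iff, Set.mem_insert_iff,
              Set.mem_setOf_eq]
            constructor
            · rintro ⟨h1 | h1, h2⟩
              · exact Or.inr ⟨h1, h2⟩
              · exact Or.inl h1
            · rintro (h1 | ⟨h1, h2⟩)
              · exact ⟨Or.inr h1, h1 ▸ hv⟩
              · exact ⟨Or.inl h1, h2⟩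
          have hnm : e ∉ {e' ∈ G.E | v ∈ e'} := fun h => hval.1.2.2 h.1
          have hdg : (applyOp G (Op.addEdge e)).deg v = G.deg v + 1 := by
            unfold LogGraph.deg
            have h' : {x ∈ (applyOp G (Op.addEdge e)).E | v ∈ x} =
                insert e {e' ∈ G.E | v ∈ e'} := hset
            rw [h', Set.ncard_insert_of_notMem hnm hSfin]
          simp [hdg, isAddEdgeInc, isRemEdgeInc, hv]
        · have hset : {e' ∈ G.E ∪ {e} | v ∈ e'} = {e' ∈ G.E | v ∈ e'} := by
            ext x
            simp only [Set.mem_union, Set.mem_singleton_iff, Set.mem_setOf_eq]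
            constructor
            · rintro ⟨h1 | h1, h2⟩
              · exact ⟨h1, h2⟩
              · exact absurd (h1 ▸ h2) hv
            · rintro ⟨h1, h2⟩; exact ⟨Or.inl h1, h2⟩
          have hdg : (applyOp G (Op.addEdge e)).deg v = G.deg v := by
            unfold LogGraph.deg
            have h' : {x ∈ (applyOp G (Op.addEdge e)).E | v ∈ x} =
                {e' ∈ G.E | v ∈ e'} := hset
            rw [h']
          simp [hdg, isAddEdgeInc, isRemEdgeInc, hv]
      | remEdge e =>
        by_cases hv : v ∈ e
        · have hset : {e' ∈ G.E \ {e} | v ∈ e'} = {e' ∈ G.E | v ∈ e'} \ {e} := by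
            ext x
            simp only [Set.mem_diff, Set.mem_singleton_iff, Set.mem_setOf_eq]
            tauto
          have hmem : e ∈ {e' ∈ G.E | v ∈ e'} := ⟨hval.1, hv⟩
          have hins : {e' ∈ G.E | v ∈ e'} =
              insert e ({e' ∈ G.E | v ∈ e'} \ {e}) := by
            rw [Set.insert_diff_singleton, Set.insert_eq_of_mem hmem]
          have hnm : e ∉ {e' ∈ G.E | v ∈ e'} \ {e} := fun h => h.2 rfl
          have hdfin : ({e' ∈ G.E | v ∈ e'} \ {e}).Finite := hSfin.subset Set.diff_subset
          have hcard : ({e' ∈ G.E | v ∈ e'}).ncard =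
              ({e' ∈ G.E | v ∈ e'} \ {e}).ncard + 1 := by
            conv_lhs => rw [hins]
            exact Set.ncard_insert_of_notMem hnm hdfin
          have hdg : G.deg v = (applyOp G (Op.remEdge e)).deg v + 1 := by
            unfold LogGraph.deg
            have h' : {x ∈ (applyOp G (Op.remEdge e)).E | v ∈ x} =
                {e' ∈ G.E | v ∈ e'} \ {e} := hset
            rw [h']
            exact hcard
          simp [hdg, isAddEdgeInc, isRemEdgeInc, hv]
        · have hset : {e' ∈ G.E \ {e} | v ∈ e'} = {e' ∈ G.E | v ∈ e'} := by
            ext x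
            simp only [Set.mem_diff, Set.mem_singleton_iff, Set.mem_setOf_eq]
            constructor
            · rintro ⟨⟨h1, _⟩, h2⟩; exact ⟨h1, h2⟩
            · rintro ⟨h1, h2⟩
              exact ⟨⟨h1, fun he => hv (he ▸ h2)⟩, h2⟩
          have hdg : (applyOp G (Op.remEdge e)).deg v = G.deg v := by
            unfold LogGraph.deg
            have h' : {x ∈ (applyOp G (Op.remEdge e)).E | v ∈ x} =
                {e' ∈ G.E | v ∈ e'} := hset
            rw [h']
          simp [hdg, isAddEdgeInc, isRemEdgeInc, hv]
    have := ih (applyOp G op) (applyOp_E_finite G op hfin) hval.2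
    simp only [applySeq, List.foldl_cons] at this ⊢
    rw [this, hstep]
    simp only [List.countP_cons]
    by_cases h1 : isAddEdgeInc v op <;> by_cases h2 : isRemEdgeInc v op <;>
      simp [h1, h2] <;> push_cast <;> ring

lemma filter_eq_takeWhile {α τ : Type*} [LinearOrder τ] (t : τ) :
    ∀ (L : List (Op α × τ)), (L.Pairwise fun p q => p.2 ≤ q.2) →
      L.filter (fun p => decide (p.2 ≤ t)) = L.takeWhile (fun p => decide (p.2 ≤ t)) := by
  intro L
  induction L with
  | nil => intro _; rfl
  | cons a l ih =>
    intro hp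
    by_cases ha : a.2 ≤ t
    · simp only [List.filter_cons, List.takeWhile_cons, ha, decide_true]
      simp [ih (List.Pairwise.of_cons hp)]
    · simp only [List.filter_cons, List.takeWhile_cons, ha, decide_false, if_neg,
        Bool.false_eq_true, not_false_eq_true, if_false]
      rw [List.filter_eq_nil_iff]
      intro b hb
      have : a.2 ≤ b.2 := (List.pairwise_cons.mp hp).1 b hb
      simp only [decide_eq_true_eq]
      intro hbt
      exact ha (le_trans this hbt)

lemma validSeq_snapshot {α τ : Type*} [LinearOrder τ] (SG0 : LogGraph α)
    (L : List (Op α × τ)) (t : τ)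
    (hmono : L.Pairwise fun p q => p.2 ≤ q.2)
    (hval : validSeq SG0 (L.map Prod.fst)) :
    validSeq SG0 ((L.filter fun p => decide (p.2 ≤ t)).map Prod.fst) := by
  rw [filter_eq_takeWhile t L hmono]
  have : L = L.takeWhile (fun p => decide (p.2 ≤ t)) ++
      L.dropWhile (fun p => decide (p.2 ≤ t)) := List.takeWhile_append_dropWhile.symm
  rw [this, List.map_append] at hval
  exact validSeq_append_left _ _ _ hval

lemma countP_split {β : Type*} (p q r : β → Bool)
    (h : ∀ x, (if p x then 1 else 0) = (if q x then 1 else 0) + (if r x then 1 else 0 : ℕ)) :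
    ∀ (l : List β), l.countP p = l.countP q + l.countP r := by
  intro l
  induction l with
  | nil => rfl
  | cons a l ih =>
    simp only [List.countP_cons, ih]
    have := h a
    by_cases h1 : p a <;> by_cases h2 : q a <;> by_cases h3 : r a <;>
      simp [h1, h2, h3] at this ⊢ <;> omega

/-- A differential range degree query can be answered from the delta alone:
the change of the degree of `v` between times `t_k ≤ t_l` equals the number of logged
`addEdge` operations incident to `v` with timestamp in `(t_k, t_l]` minus the number of
logged `remEdge` operations incident to `v` with timestamp in `(t_k, t_l]`. -/
theorem degree_differential {α τ : Type*} [DecidableEq α] [LinearOrder τ]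
    (t0 tcur : τ) (SG0 : LogGraph α) (L : List (Op α × τ))
    (hwf : SG0.WellFormed) (hfin : SG0.E.Finite)
    (hts : ∀ p ∈ L, t0 ≤ p.2 ∧ p.2 ≤ tcur)
    (hmono : L.Pairwise fun p q => p.2 ≤ q.2)
    (hval : validSeq SG0 (L.map Prod.fst))
    (v : α) (tk tl : τ) (h0k : t0 ≤ tk) (hkl : tk ≤ tl) (hlc : tl ≤ tcur) :
    ((snapshot SG0 L tl).deg v : ℤ) - ((snapshot SG0 L tk).deg v : ℤ) =
      (L.countP fun p => decide (tk < p.2 ∧ p.2 ≤ tl) && isAddEdgeInc v p.1 : ℤ) -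
      (L.countP fun p => decide (tk < p.2 ∧ p.2 ≤ tl) && isRemEdgeInc v p.1 : ℤ) := by
  have hdeg : ∀ t : τ, ((snapshot SG0 L t).deg v : ℤ) =
      (SG0.deg v : ℤ) +
        (L.countP fun p => decide (p.2 ≤ t) && isAddEdgeInc v p.1) -
        (L.countP fun p => decide (p.2 ≤ t) && isRemEdgeInc v p.1) := by
    intro t
    have hv := validSeq_snapshot SG0 L t hmono hval
    have := deg_delta v ((L.filter fun p => decide (p.2 ≤ t)).map Prod.fst) SG0 hfin hv
    rw [snapshot, applySeq] at *
    rw [this, List.countP_map, List.countP_map, List.countP_filter, List.countP_filter]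
    have h1 : (fun (a : Op α × τ) => (isAddEdgeInc v ∘ Prod.fst) a && decide (a.2 ≤ t)) =
        fun p => decide (p.2 ≤ t) && isAddEdgeInc v p.1 := by
      funext p; simp [Function.comp, Bool.and_comm]
    have h2 : (fun (a : Op α × τ) => (isRemEdgeInc v ∘ Prod.fst) a && decide (a.2 ≤ t)) =
        fun p => decide (p.2 ≤ t) && isRemEdgeInc v p.1 := by
      funext p; simp [Function.comp, Bool.and_comm]
    rw [h1, h2]
  have hsplit : ∀ X : Op α → Bool,
      (L.countP fun p => decide (p.2 ≤ tl) && X p.1) =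
      (L.countP fun p => decide (p.2 ≤ tk) && X p.1) +
      (L.countP fun p => decide (tk < p.2 ∧ p.2 ≤ tl) && X p.1) := by
    intro X
    apply countP_split
    intro x
    by_cases h1 : x.2 ≤ tk
    · have h2 : x.2 ≤ tl := le_trans h1 hkl
      have h3 : ¬ (tk < x.2 ∧ x.2 ≤ tl) := fun h => absurd h1 (not_le.mpr h.1)
      by_cases hX : X x.1 <;> simp [h1, h2, h3, hX]
    · by_cases h2 : x.2 ≤ tl
      · have h3 : tk < x.2 ∧ x.2 ≤ tl := ⟨not_le.mp h1, h2⟩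
        by_cases hX : X x.1 <;> simp [h1, h2, h3, hX]
      · have h3 : ¬ (tk < x.2 ∧ x.2 ≤ tl) := fun h => h2 h.2
        by_cases hX : X x.1 <;> simp [h1, h2, h3, hX]
  rw [hdeg tl, hdeg tk, hsplit (isAddEdgeInc v), hsplit (isRemEdgeInc v)]
  push_cast
  ring
end

section
/- Let a timestamped log over [t0, t_cur] starting from a well-formed graph SG_{t0} with a finite node set be given. Then for all t_k ≤ t_l in [t0, t_cur], the change in the number of nodes satisfies (as integers): |V(SG_{t_l})| − |V(SG_{t_k})| = (number of logged addNode operations with timestamp in (t_k, t_l]) − (number of logged remNode operations with timestamp in (t_k, t_l]). -/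
/-- `op` is an `addNode` operation. -/
def isAddNode {α : Type*} : Op α → Bool
  | Op.addNode _ => true
  | _ => false

/-- `op` is a `remNode` operation. -/
def isRemNode {α : Type*} : Op α → Bool
  | Op.remNode _ => true
  | _ => false

section Aux

variable {α τ : Type*}

theorem validSeq_append (G : LogGraph α) (l1 l2 : List (Op α)) :
    validSeq G (l1 ++ l2) ↔ validSeq G l1 ∧ validSeq (applySeq G l1) l2 := by
  induction l1 generalizing G with
  | nil => simp [validSeq, applySeq]
  | cons op rest ih =>
    show validAt G op ∧ validSeq (applyOp G op) (rest ++ l2) ↔ _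
    rw [ih]
    show _ ↔ (validAt G op ∧ validSeq (applyOp G op) rest) ∧ _
    have : applySeq G (op :: rest) = applySeq (applyOp G op) rest := rfl
    rw [this]
    tauto

theorem applySeq_append (G : LogGraph α) (l1 l2 : List (Op α)) :
    applySeq G (l1 ++ l2) = applySeq (applySeq G l1) l2 :=
  List.foldl_append ..

theorem applySeq_ncard (l : List (Op α)) :
    ∀ G : LogGraph α, G.V.Finite → validSeq G l →
      (applySeq G l).V.Finite ∧
      ((applySeq G l).V.ncard : ℤ) =
        G.V.ncard + l.countP isAddNode - l.countP isRemNode := by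
  induction l with
  | nil => intro G hfin _; refine ⟨hfin, by simp [applySeq]⟩
  | cons op rest ih =>
    intro G hfin hval
    obtain ⟨h1, h2⟩ := hval
    have hstep : (applyOp G op).V.Finite ∧
        ((applyOp G op).V.ncard : ℤ) = G.V.ncard
          + (if isAddNode op then 1 else 0) - (if isRemNode op then 1 else 0) := by
      cases op with
      | addNode v =>
        refine ⟨hfin.union (Set.finite_singleton v), ?_⟩
        have hV : (applyOp G (Op.addNode v)).V = insert v G.V := by
          simp [applyOp, Set.union_singleton]
        rw [hV, Set.ncard_insert_of_notMem h1 hfin]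
        simp [isAddNode, isRemNode]
      | remNode v =>
        refine ⟨hfin.diff, ?_⟩
        have hV : (applyOp G (Op.remNode v)).V = G.V \ {v} := rfl
        rw [hV, Set.ncard_diff_singleton_of_mem h1.1]
        have hpos : 1 ≤ G.V.ncard := (Set.ncard_pos hfin).2 ⟨v, h1.1⟩
        rw [Nat.cast_sub hpos]
        simp [isAddNode, isRemNode]
      | addEdge e => exact ⟨hfin, by simp [applyOp, isAddNode, isRemNode]⟩
      | remEdge e => exact ⟨hfin, by simp [applyOp, isAddNode, isRemNode]⟩
    obtain ⟨hf', hn'⟩ := hstep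
    obtain ⟨hf'', hn''⟩ := ih (applyOp G op) hf' h2
    refine ⟨hf'', ?_⟩
    have hs : applySeq G (op :: rest) = applySeq (applyOp G op) rest := rfl
    rw [hs, hn'', hn']
    rw [List.countP_cons, List.countP_cons]
    cases op <;> simp [isAddNode, isRemNode] <;> ring

theorem filter_split [LinearOrder τ] (s t : τ) (hst : s ≤ t) (L : List (Op α × τ))
    (hmono : L.Pairwise fun p q => p.2 ≤ q.2) :
    L.filter (fun p => decide (p.2 ≤ t)) =
      L.filter (fun p => decide (p.2 ≤ s)) ++
      L.filter (fun p => decide (s < p.2 ∧ p.2 ≤ t)) := by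
  induction L with
  | nil => simp
  | cons p rest ih =>
    have hmr : rest.Pairwise fun p q => p.2 ≤ q.2 := hmono.of_cons
    have hrel : ∀ q ∈ rest, p.2 ≤ q.2 := fun q hq => List.rel_of_pairwise_cons hmono hq
    by_cases h1 : p.2 ≤ s
    · simp [List.filter_cons, h1, h1.trans hst, not_lt.2 h1, ih hmr]
    · push_neg at h1
      by_cases h2 : p.2 ≤ t
      · have hempty : rest.filter (fun p => decide (p.2 ≤ s)) = [] := by
          rw [List.filter_eq_nil_iff]
          intro q hq
          simpa using lt_of_lt_of_le h1 (hrel q hq)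
        simp [List.filter_cons, h2, not_le.2 h1, h1, hempty, ih hmr]
      · have h3 : ¬ p.2 ≤ s := fun h => h2 (h.trans hst)
        simp [List.filter_cons, h2, h3, ih hmr]

theorem split_all [LinearOrder τ] (t : τ) (L : List (Op α × τ))
    (hmono : L.Pairwise fun p q => p.2 ≤ q.2) :
    L = L.filter (fun p => decide (p.2 ≤ t)) ++
        L.filter (fun p => decide (t < p.2)) := by
  induction L with
  | nil => simp
  | cons p rest ih =>
    have hmr : rest.Pairwise fun p q => p.2 ≤ q.2 := hmono.of_cons
    have hrel : ∀ q ∈ rest, p.2 ≤ q.2 := fun q hq => List.rel_of_pairwise_cons hmono hq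
    by_cases h1 : p.2 ≤ t
    · simp only [List.filter_cons, h1, not_lt.2 h1]
      simpa using ih hmr
    · push_neg at h1
      have hempty : rest.filter (fun p => decide (p.2 ≤ t)) = [] := by
        rw [List.filter_eq_nil_iff]
        intro q hq
        simpa using lt_of_lt_of_le h1 (hrel q hq)
      have hih := ih hmr
      rw [hempty] at hih
      simp only [List.filter_cons, not_le.2 h1, h1, hempty]
      simpa using hih

end Aux

/-- The change in the number of nodes between times `t_k ≤ t_l` equals the number of
logged `addNode` operations with timestamp in `(t_k, t_l]` minus the number of logged
`remNode` operations with timestamp in `(t_k, t_l]`. -/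
theorem node_count_differential {α τ : Type*} [LinearOrder τ]
    (t0 tcur : τ) (SG0 : LogGraph α) (L : List (Op α × τ))
    (hwf : SG0.WellFormed) (hfin : SG0.V.Finite)
    (hts : ∀ p ∈ L, t0 ≤ p.2 ∧ p.2 ≤ tcur)
    (hmono : L.Pairwise fun p q => p.2 ≤ q.2)
    (hval : validSeq SG0 (L.map Prod.fst))
    (tk tl : τ) (h0k : t0 ≤ tk) (hkl : tk ≤ tl) (hlc : tl ≤ tcur) :
    ((snapshot SG0 L tl).V.ncard : ℤ) - ((snapshot SG0 L tk).V.ncard : ℤ) =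
      (L.countP fun p => decide (tk < p.2 ∧ p.2 ≤ tl) && isAddNode p.1 : ℤ) -
      (L.countP fun p => decide (tk < p.2 ∧ p.2 ≤ tl) && isRemNode p.1 : ℤ) := by
  set A := L.filter (fun p => decide (p.2 ≤ tk)) with hA
  set B := L.filter (fun p => decide (tk < p.2 ∧ p.2 ≤ tl)) with hB
  have hsplit : L.filter (fun p => decide (p.2 ≤ tl)) = A ++ B :=
    filter_split tk tl hkl L hmono
  have hall : L = (A ++ B) ++ L.filter (fun p => decide (tl < p.2)) := by
    rw [← hsplit]; exact split_all tl L hmono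
  -- validity decomposition
  have hval' : validSeq SG0 (List.map Prod.fst L) := hval
  rw [hall] at hval'
  rw [List.map_append, List.map_append, validSeq_append] at hval'
  obtain ⟨hvAB, _⟩ := hval'
  rw [validSeq_append] at hvAB
  obtain ⟨hvA, hvB⟩ := hvAB
  -- snapshots
  have hsk : snapshot SG0 L tk = applySeq SG0 (A.map Prod.fst) := rfl
  have hsl : snapshot SG0 L tl =
      applySeq (applySeq SG0 (A.map Prod.fst)) (B.map Prod.fst) := by
    unfold snapshot
    rw [hsplit, List.map_append, applySeq_append]
  obtain ⟨hfA, _⟩ := applySeq_ncard (A.map Prod.fst) SG0 hfin hvA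
  obtain ⟨_, hB2⟩ := applySeq_ncard (B.map Prod.fst) _ hfA hvB
  rw [hsl, hsk, hB2]
  have hadd : (B.map Prod.fst).countP isAddNode =
      L.countP fun p => decide (tk < p.2 ∧ p.2 ≤ tl) && isAddNode p.1 := by
    rw [List.countP_map, hB, List.countP_filter]
    congr 1
    funext p
    simp [Function.comp, Bool.and_comm]
  have hrem : (B.map Prod.fst).countP isRemNode =
      L.countP fun p => decide (tk < p.2 ∧ p.2 ≤ tl) && isRemNode p.1 := by
    rw [List.countP_map, hB, List.countP_filter]
    congr 1
    funext p
    simp [Function.comp, Bool.and_comm]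
  rw [hadd, hrem]
  ring
end
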